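/- For k ∈ ℕ, let F_k be the equivalence relation on (2^ℕ)^ℕ defined by x F_k y iff x(m) = y(m) for all m ≥ k. If B ⊆ (2^ℕ)^ℕ has the Baire property and F_{k+1} restricted to B has countable index over F_k restricted to B (i.e., every F_{k+1}-class of B meets only countably many F_k-classes of B), then B is meager. -/

import Mathlib

open Set

open Topology Filter in
/-- A nonempty open set in a Baire space is not meagre. -/
lemma aux_open_not_meagre {X : Type*} [TopologicalSpace X] [BaireSpace X] {V : Set X}
    (hV : IsOpen V) (hne : V.Nonempty) : ¬ IsMeagre V := by
  intro hm
  obtain ⟨x, hx1, hx2⟩ := (dense_of_mem_residual hm).inter_open_nonempty V hV hne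
  exact hx2 hx1

open Topology Filter in
/-- The complement of a singleton is dense in `ℕ → Bool`. -/
lemma aux_dense_compl_singleton (t : ℕ → Bool) : Dense ({t}ᶜ : Set (ℕ → Bool)) := by
  rw [dense_iff_inter_open]
  intro U hU hUne
  obtain ⟨x, hx⟩ := hUne
  by_cases hxt : x = t
  · subst hxt
    have htend : Tendsto (fun n => Function.update x n (!(x n))) atTop (𝓝 x) := by
      rw [tendsto_pi_nhds]
      intro j
      refine Tendsto.congr' (f₁ := fun _ => x j) ?_ tendsto_const_nhds
      filter_upwards [eventually_gt_atTop j] with n hn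
      exact (Function.update_of_ne (by omega) _ _).symm
    obtain ⟨n, hn⟩ := (htend.eventually (hU.mem_nhds hx)).exists
    refine ⟨_, hn, ?_⟩
    simp only [mem_compl_iff, mem_singleton_iff]
    intro hEq
    have hcg := congrFun hEq n
    rw [Function.update_self] at hcg
    exact Bool.not_ne_self (x n) hcg
  · exact ⟨x, hx, hxt⟩

open Topology Filter in
/-- Countable sets in `ℕ → Bool` are meagre. -/
lemma aux_countable_meagre {T : Set (ℕ → Bool)} (hT : T.Countable) : IsMeagre T := by
  rw [IsMeagre]
  have hT' : Tᶜ = ⋂ t ∈ T, ({t}ᶜ : Set (ℕ → Bool)) := by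
    rw [← compl_iUnion₂, biUnion_of_singleton]
  rw [hT']
  exact (countable_bInter_mem hT).mpr fun t _ =>
    residual_of_dense_open isOpen_compl_singleton (aux_dense_compl_singleton t)

open Topology Filter in
/-- Kuratowski–Ulam (one direction): if `M` is meagre in `A × C` with `A`
second countable, then for residually many `c`, the section of `M` at `c` is meagre. -/
lemma aux_ku {A C : Type*} [TopologicalSpace A] [TopologicalSpace C]
    [SecondCountableTopology A]
    {M : Set (A × C)} (hM : IsMeagre M) :
    {c : C | IsMeagre {a : A | (a, c) ∈ M}} ∈ residual C := by
  obtain ⟨S, hSo, hSd, hSc, hSsub⟩ := mem_residual_iff.mp hM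
  obtain ⟨b, hbc, hbne, hbasis⟩ := TopologicalSpace.exists_countable_basis A
  have hGmem : (⋂ W ∈ S, ⋂ V ∈ b, Prod.snd '' (W ∩ V ×ˢ (univ : Set C))) ∈ residual C := by
    refine (countable_bInter_mem hSc).mpr fun W hW =>
      (countable_bInter_mem hbc).mpr fun V hV => ?_
    refine residual_of_dense_open
      (isOpenMap_snd _ ((hSo W hW).inter ((hbasis.isOpen hV).prod isOpen_univ))) ?_
    rw [dense_iff_inter_open]
    intro O hO hOne
    have hVne : V.Nonempty := nonempty_iff_ne_empty.mpr (fun hh => hbne (hh ▸ hV))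
    obtain ⟨p, hp⟩ := (hSd W hW).inter_open_nonempty (V ×ˢ O)
      ((hbasis.isOpen hV).prod hO) (hVne.prod hOne)
    exact ⟨p.2, hp.1.2, ⟨p, ⟨hp.2, hp.1.1, trivial⟩, rfl⟩⟩
  refine mem_of_superset hGmem ?_
  intro c hc
  simp only [mem_iInter] at hc
  rw [mem_setOf_eq, IsMeagre]
  have hsub : (⋂ W ∈ S, {a : A | (a, c) ∈ W}) ⊆ {a : A | (a, c) ∈ M}ᶜ := by
    intro a ha
    simp only [mem_iInter, mem_setOf_eq] at ha
    intro hmem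
    exact (hSsub (mem_sInter.mpr fun W hW => ha W hW)) hmem
  refine mem_of_superset ((countable_bInter_mem hSc).mpr fun W hW =>
    residual_of_dense_open ?_ ?_) hsub
  · exact (hSo W hW).preimage (continuous_id.prodMk continuous_const :
      Continuous fun a : A => (a, c))
  · rw [dense_iff_inter_open]
    intro O hO hOne
    obtain ⟨a0, ha0⟩ := hOne
    obtain ⟨V, hVb, _, hVO⟩ := hbasis.exists_subset_of_mem_open ha0 hO
    obtain ⟨p, ⟨hpW, hpV, -⟩, hpc⟩ := hc W hW V hVb
    exact ⟨p.1, hVO hpV, by rw [mem_setOf_eq, show (p.1, c) = p from by rw [← hpc]]; exact hpW⟩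

/-- If `B ⊆ (2^ℕ)^ℕ` has the Baire property and `F_{k+1}` has countable
index over `F_k` on `B`, then `B` is meager. Here `x F_k y ↔ ∀ m ≥ k, x m = y m`. -/
theorem statement1 (k : ℕ) (B : Set (ℕ → ℕ → Bool)) (hB : BaireMeasurableSet B)
    (h : ∀ x ∈ B, ∃ D : Set (ℕ → ℕ → Bool), D.Countable ∧
      ∀ y ∈ B, (∀ m ≥ k + 1, x m = y m) → ∃ d ∈ D, ∀ m ≥ k, y m = d m) :
    IsMeagre B := by
  classical
  by_contra h0
  obtain ⟨U, hUo, hBU⟩ := hB.residualEq_isOpen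
  have hE : {x | (x ∈ B) = (x ∈ U)} ∈ residual _ := hBU
  have hEc : IsMeagre {x : ℕ → ℕ → Bool | (x ∈ B) = (x ∈ U)}ᶜ := by
    rw [IsMeagre, compl_compl]; exact hE
  have hUBm : IsMeagre (U \ B) := hEc.mono (by
    rintro x ⟨hxU, hxB⟩ hmem
    exact hxB (hmem.symm ▸ hxU))
  have hBUm : IsMeagre (B \ U) := hEc.mono (by
    rintro x ⟨hxB, hxU⟩ hmem
    exact hxU (hmem ▸ hxB))
  have hUne : U.Nonempty := by
    rcases U.eq_empty_or_nonempty with hh | hh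
    · exact absurd (hBUm.mono (fun x hx => ⟨hx, by simp [hh]⟩ : B ⊆ B \ U)) h0
    · exact hh
  set H := Homeomorph.funSplitAt (ℕ → Bool) k with hH
  set M := H.symm ⁻¹' (U \ B) with hMdef
  have hMm : IsMeagre M := hUBm.preimage_of_isOpenMap H.symm.continuous H.symm.isOpenMap
  obtain ⟨x0, hx0⟩ := hUne
  have hpU' : H x0 ∈ H.symm ⁻¹' U := by
    simp only [mem_preimage, Homeomorph.symm_apply_apply]; exact hx0
  obtain ⟨VA, VC, hVAo, hVCo, hpa, hpc, hsubU⟩ :=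
    isOpen_prod_iff.mp (hUo.preimage H.symm.continuous) (H x0).1 (H x0).2 (by simpa using hpU')
  have hG := aux_ku hMm
  obtain ⟨c, hcVC, hcG⟩ := (dense_of_mem_residual hG).inter_open_nonempty VC hVCo ⟨(H x0).2, hpc⟩
  have hsec : IsMeagre {a : ℕ → Bool | (a, c) ∈ M} := hcG
  have hsymmk : ∀ (a : ℕ → Bool) (cc : {j : ℕ // j ≠ k} → ℕ → Bool),
      H.symm (a, cc) k = a := fun a cc => dif_pos rfl
  have hsymm : ∀ (a : ℕ → Bool) (cc : {j : ℕ // j ≠ k} → ℕ → Bool) (m : ℕ) (hm : m ≠ k),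
      H.symm (a, cc) m = cc ⟨m, hm⟩ := fun a cc m hm => dif_neg hm
  have hBmem : ∀ a ∈ VA \ {a : ℕ → Bool | (a, c) ∈ M}, H.symm (a, c) ∈ B := by
    rintro a ⟨haVA, haS⟩
    have hUmem : H.symm (a, c) ∈ U := hsubU ⟨haVA, hcVC⟩
    by_contra hB'
    exact haS ⟨hUmem, hB'⟩
  have hVAne : (VA \ {a : ℕ → Bool | (a, c) ∈ M}).Nonempty := by
    by_contra hne
    rw [not_nonempty_iff_eq_empty, diff_eq_empty] at hne
    exact aux_open_not_meagre hVAo ⟨(H x0).1, hpa⟩ (hsec.mono hne)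
  obtain ⟨a0, ha0⟩ := hVAne
  obtain ⟨D, hDc, hDspec⟩ := h (H.symm (a0, c)) (hBmem a0 ha0)
  have key : VA \ {a : ℕ → Bool | (a, c) ∈ M} ⊆ (fun d : ℕ → ℕ → Bool => d k) '' D := by
    intro a ha
    have hy := hBmem a ha
    have hagree : ∀ m ≥ k + 1, H.symm (a0, c) m = H.symm (a, c) m := by
      intro m hm
      have hmk : m ≠ k := by omega
      rw [hsymm a0 c m hmk, hsymm a c m hmk]
    obtain ⟨d, hdD, hd⟩ := hDspec _ hy hagree
    refine ⟨d, hdD, ?_⟩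
    have hk := hd k (le_refl k)
    rw [hsymmk a c] at hk
    exact hk.symm
  have hVAm : IsMeagre VA := by
    have hsplit : VA ⊆ {a : ℕ → Bool | (a, c) ∈ M} ∪ (fun d : ℕ → ℕ → Bool => d k) '' D := by
      intro a ha
      by_cases hs : (a, c) ∈ M
      · exact Or.inl hs
      · exact Or.inr (key ⟨ha, hs⟩)
    refine IsMeagre.mono hsplit ?_
    rw [IsMeagre, compl_union]
    exact Filter.inter_mem hsec (aux_countable_meagre (hDc.image _))
  exact aux_open_not_meagre hVAo ⟨(H x0).1, hpa⟩ hVAm
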